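/- Let 𝒢 be a partition of the coordinate set {1, …, p} into N disjoint nonempty groups, let M = max_{G ∈ 𝒢} |G|, and let 1 ≤ s ≤ N and m ≥ s·M be natural numbers. Let x : Fin m → ℝ^p be any m points. Then the number of distinct Boolean vectors (1(⟨w, x₁⟩ ≥ 0), …, 1(⟨w, x_m⟩ ≥ 0)) realized as w ranges over the group-sparse set {w ∈ ℝ^p : at most s groups G ∈ 𝒢 satisfy w_G ≠ 0} is at most C(N, s)·(e·m/(s·M))^{s·M}, and hence at most N^s·(e·m/(s·M))^{s·M}. -/

import Mathlib

open scoped BigOperators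

/-- The set of dichotomies induced on the points `x` by homogeneous halfspaces with
normal vectors ranging over `W`. -/
def dichotomies {p m : ℕ} (W : Set (Fin p → ℝ)) (x : Fin m → (Fin p → ℝ)) :
    Set (Fin m → Bool) :=
  {b | ∃ w ∈ W, ∀ i, b i = decide (0 ≤ ∑ k, w k * x i k)}

lemma shattered_card_le {p m : ℕ} (K : Finset (Fin p)) (x : Fin m → Fin p → ℝ)
    (𝒜 : Finset (Finset (Fin m)))
    (h𝒜 : ∀ u ∈ 𝒜, ∃ w : Fin p → ℝ, (∀ i ∉ K, w i = 0) ∧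
      ∀ i, (i ∈ u ↔ 0 ≤ ∑ k, w k * x i k))
    (T : Finset (Fin m)) (hT : 𝒜.Shatters T) : T.card ≤ K.card := by
  classical
  by_contra hlt
  push_neg at hlt
  set v : Fin m → (↥K → ℝ) := fun i k => x i k with hv
  have hdep : ¬ LinearIndependent ℝ (fun i : ↥T => v i) := by
    intro hli
    have := hli.fintype_card_le_finrank
    rw [Module.finrank_pi] at this
    simp only [Fintype.card_coe] at this
    omega
  obtain ⟨g, hgsum, j, hgj⟩ := Fintype.not_linearIndependent_iff.1 hdep
  have claim : ∀ a : ↥T → ℝ, (∑ i : ↥T, a i • v i = 0) → (∃ i, 0 < a i) → False := by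
    rintro a hsum ⟨i₀, hi₀⟩
    set A : Fin m → ℝ := fun i => if h : i ∈ T then a ⟨i, h⟩ else 0 with hA
    have hAmem : ∀ i (h : i ∈ T), A i = a ⟨i, h⟩ := fun i h => by simp [hA, h]
    have hsum' : ∀ k : ↥K, ∑ i ∈ T, A i * x i k = 0 := by
      intro k
      have h1 : ∑ i ∈ T, A i * x i k = ∑ i ∈ T.attach, A i.1 * x i.1 k :=
        (Finset.sum_attach T fun i => A i * x i k).symm
      have h2 : ∑ i ∈ T.attach, A i.1 * x i.1 k = ∑ i : ↥T, a i * v i k := by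
        refine Finset.sum_congr rfl fun i _ => ?_
        rw [hAmem i.1 i.2]
      have h3 : ∑ i : ↥T, a i * v i k = (∑ i : ↥T, a i • v i) k := by
        rw [Finset.sum_apply]; rfl
      rw [h1, h2, h3, hsum]; rfl
    obtain ⟨u, hu, htu⟩ := hT (Finset.filter_subset (fun i => A i ≤ 0) T)
    obtain ⟨w, hw0, hwu⟩ := h𝒜 u hu
    have hred : ∀ i, ∑ k, w k * x i k = ∑ k ∈ K, w k * x i k := by
      intro i
      exact (Finset.sum_subset (K.subset_univ) (fun k _ hk => by
        rw [hw0 k hk, zero_mul])).symm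
    have hiff : ∀ i ∈ T, ((0 ≤ ∑ k ∈ K, w k * x i k) ↔ A i ≤ 0) := by
      intro i hi
      rw [← hred i, ← hwu i]
      constructor
      · intro hiu
        have : i ∈ T ∩ u := Finset.mem_inter.2 ⟨hi, hiu⟩
        rw [htu, Finset.mem_filter] at this
        exact this.2
      · intro hAi
        have : i ∈ T ∩ u := by rw [htu, Finset.mem_filter]; exact ⟨hi, hAi⟩
        exact (Finset.mem_inter.1 this).2
    have hS0 : ∑ i ∈ T, A i * (∑ k ∈ K, w k * x i k) = 0 := by
      have : ∑ i ∈ T, A i * (∑ k ∈ K, w k * x i k)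
          = ∑ k ∈ K, w k * (∑ i ∈ T, A i * x i k) := by
        calc ∑ i ∈ T, A i * ∑ k ∈ K, w k * x i k
            = ∑ i ∈ T, ∑ k ∈ K, A i * (w k * x i k) := by simp_rw [Finset.mul_sum]
          _ = ∑ k ∈ K, ∑ i ∈ T, A i * (w k * x i k) := Finset.sum_comm
          _ = ∑ k ∈ K, w k * ∑ i ∈ T, A i * x i k := by
              refine Finset.sum_congr rfl fun k _ => ?_
              rw [Finset.mul_sum]
              exact Finset.sum_congr rfl fun i _ => by ring
      rw [this]
      rw [← Finset.sum_attach K fun k => w k * ∑ i ∈ T, A i * x i k]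
      refine Finset.sum_eq_zero fun k _ => by rw [hsum' k, mul_zero]
    have hSneg : ∑ i ∈ T, A i * (∑ k ∈ K, w k * x i k) < 0 := by
      have := Finset.sum_lt_sum (f := fun i => A i * (∑ k ∈ K, w k * x i k))
        (g := fun _ => (0:ℝ)) (s := T)
        (fun i hi => by
          rcases le_or_gt (A i) 0 with h | h
          · exact mul_nonpos_of_nonpos_of_nonneg h ((hiff i hi).2 h)
          · have hip : ¬ (0 ≤ ∑ k ∈ K, w k * x i k) := fun hc => absurd ((hiff i hi).1 hc) (not_le.2 h)
            exact (mul_neg_of_pos_of_neg h (not_le.1 hip)).le)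
        ⟨i₀.1, i₀.2, by
          have hA0 : 0 < A i₀.1 := by rw [hAmem i₀.1 i₀.2]; exact hi₀
          have hip : ¬ (0 ≤ ∑ k ∈ K, w k * x (i₀:Fin m) k) :=
            fun hc => absurd ((hiff i₀.1 i₀.2).1 hc) (not_le.2 hA0)
          exact mul_neg_of_pos_of_neg hA0 (not_le.1 hip)⟩
      simpa using this
    exact absurd hS0 (ne_of_lt hSneg)
  rcases lt_trichotomy (g j) 0 with h | h | h
  · refine claim (fun i => - g i) ?_ ⟨j, show 0 < -g j from neg_pos.2 h⟩
    simp only [neg_smul, Finset.sum_neg_distrib, hgsum, neg_zero]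
  · exact hgj h
  · exact claim g hgsum ⟨j, h⟩

lemma dich_ncard_le {p m : ℕ} (K : Finset (Fin p)) (x : Fin m → Fin p → ℝ) :
    (dichotomies {w : Fin p → ℝ | ∀ i ∉ K, w i = 0} x).ncard
      ≤ ∑ k ∈ Finset.Iic K.card, m.choose k := by
  classical
  have hfin : (dichotomies {w : Fin p → ℝ | ∀ i ∉ K, w i = 0} x).Finite := Set.toFinite _
  set F : (Fin m → Bool) → Finset (Fin m) :=
    fun b => Finset.univ.filter (fun i => b i = true) with hF
  have hFinj : Function.Injective F := by
    intro b b' h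
    funext i
    have := Finset.ext_iff.1 h i
    simp only [hF, Finset.mem_filter, Finset.mem_univ, true_and] at this
    cases hb : b i <;> cases hb' : b' i <;> simp_all
  set 𝒜 : Finset (Finset (Fin m)) := hfin.toFinset.image F with h𝒜def
  have hcard : (dichotomies {w : Fin p → ℝ | ∀ i ∉ K, w i = 0} x).ncard = 𝒜.card := by
    rw [Set.ncard_eq_toFinset_card _ hfin, h𝒜def, Finset.card_image_of_injective _ hFinj]
  have h𝒜 : ∀ u ∈ 𝒜, ∃ w : Fin p → ℝ, (∀ i ∉ K, w i = 0) ∧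
      ∀ i, (i ∈ u ↔ 0 ≤ ∑ k, w k * x i k) := by
    intro u hu
    rw [h𝒜def, Finset.mem_image] at hu
    obtain ⟨b, hb, rfl⟩ := hu
    rw [Set.Finite.mem_toFinset] at hb
    obtain ⟨w, hw, hbw⟩ := hb
    refine ⟨w, hw, fun i => ?_⟩
    simp only [hF, Finset.mem_filter, Finset.mem_univ, true_and, hbw i,
      decide_eq_true_iff]
  have hvc : 𝒜.vcDim ≤ K.card := by
    refine Finset.sup_le fun T hT => ?_
    exact shattered_card_le K x 𝒜 h𝒜 T (Finset.mem_shatterer.1 hT)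
  calc (dichotomies {w : Fin p → ℝ | ∀ i ∉ K, w i = 0} x).ncard
      = 𝒜.card := hcard
    _ ≤ 𝒜.shatterer.card := Finset.card_le_card_shatterer 𝒜
    _ ≤ ∑ k ∈ Finset.Iic 𝒜.vcDim, (Fintype.card (Fin m)).choose k :=
        Finset.card_shatterer_le_sum_vcDim
    _ ≤ ∑ k ∈ Finset.Iic K.card, m.choose k := by
        rw [Fintype.card_fin]
        exact Finset.sum_le_sum_of_subset (Finset.Iic_subset_Iic.2 hvc)

lemma lemB (d m : ℕ) (hd : 1 ≤ d) (hdm : d ≤ m) :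
    ((∑ k ∈ Finset.Iic d, m.choose k : ℕ) : ℝ) ≤ (Real.exp 1 * m / d) ^ d := by
  have hm0 : 0 < m := lt_of_lt_of_le hd hdm
  have hm : (0:ℝ) < m := by exact_mod_cast hm0
  have hdR : (0:ℝ) < d := by exact_mod_cast hd
  set r : ℝ := d / m with hr
  have hr0 : 0 < r := by positivity
  have hr1 : r ≤ 1 := by
    rw [hr, div_le_one hm]; exact_mod_cast hdm
  have hrm : r * m = d := by rw [hr, div_mul_cancel₀ _ hm.ne']
  -- key chain
  have key : ((∑ k ∈ Finset.Iic d, m.choose k : ℕ) : ℝ) * r ^ d ≤ Real.exp 1 ^ d := by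
    have h1 : ((∑ k ∈ Finset.Iic d, m.choose k : ℕ) : ℝ) * r ^ d
        ≤ ∑ k ∈ Finset.Iic d, (m.choose k : ℝ) * r ^ k := by
      push_cast
      rw [Finset.sum_mul]
      refine Finset.sum_le_sum fun k hk => ?_
      have : r ^ d ≤ r ^ k := pow_le_pow_of_le_one hr0.le hr1 (Finset.mem_Iic.1 hk)
      exact mul_le_mul_of_nonneg_left this (by positivity)
    have h2 : ∑ k ∈ Finset.Iic d, (m.choose k : ℝ) * r ^ k
        ≤ ∑ k ∈ Finset.range (m + 1), (m.choose k : ℝ) * r ^ k := by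
      refine Finset.sum_le_sum_of_subset_of_nonneg ?_ (fun k _ _ => by positivity)
      intro k hk
      simp only [Finset.mem_Iic, Finset.mem_range] at *
      omega
    have h3 : ∑ k ∈ Finset.range (m + 1), (m.choose k : ℝ) * r ^ k = (r + 1) ^ m := by
      rw [add_pow]
      refine Finset.sum_congr rfl fun k _ => by ring
    have h4 : (r + 1) ^ m ≤ Real.exp r ^ m :=
      pow_le_pow_left₀ (by positivity) (Real.add_one_le_exp r) m
    have h5 : Real.exp r ^ m = Real.exp 1 ^ d := by
      rw [← Real.exp_nat_mul, mul_comm, hrm, Real.exp_one_pow]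
    calc _ ≤ _ := h1
      _ ≤ _ := h2
      _ = _ := h3
      _ ≤ _ := h4
      _ = _ := h5
  have hrd : 0 < r ^ d := by positivity
  rw [← le_div_iff₀ hrd] at key
  refine key.trans_eq ?_
  rw [hr, div_pow, div_div_eq_mul_div, mul_div_assoc, ← div_pow, mul_div_assoc, ← mul_pow]

/-- Let `𝒢` partition `{1,…,p}` into `N` disjoint nonempty groups of maximal
size `M`, let `1 ≤ s ≤ N` and `m ≥ s·M`.  The number of dichotomies realized by
`x ↦ 1(⟨w, x⟩ ≥ 0)` as `w` ranges over the group-sparse set (at most `s` groups with a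
nonzero coordinate) is at most `C(N, s)·(e·m/(s·M))^(s·M)`, and hence at most
`N^s·(e·m/(s·M))^(s·M)`. -/
theorem stmt8 (p N M s m : ℕ) (𝒢 : Finset (Finset (Fin p)))
    (hN : 𝒢.card = N)
    (hne : ∀ G ∈ 𝒢, G.Nonempty)
    (hdisj : ∀ G ∈ 𝒢, ∀ G' ∈ 𝒢, G ≠ G' → Disjoint G G')
    (hcover : ∀ i : Fin p, ∃ G ∈ 𝒢, i ∈ G)
    (hM : M = 𝒢.sup Finset.card)
    (hs : 1 ≤ s) (hsN : s ≤ N) (hm : s * M ≤ m)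
    (x : Fin m → (Fin p → ℝ)) :
    (((dichotomies {w : Fin p → ℝ |
        (𝒢.filter fun G => ∃ i ∈ G, w i ≠ 0).card ≤ s} x).ncard : ℝ)
      ≤ (N.choose s : ℝ) * (Real.exp 1 * m / (s * M)) ^ (s * M))
    ∧ (((dichotomies {w : Fin p → ℝ |
        (𝒢.filter fun G => ∃ i ∈ G, w i ≠ 0).card ≤ s} x).ncard : ℝ)
      ≤ (N : ℝ) ^ s * (Real.exp 1 * m / (s * M)) ^ (s * M)) := by
  classical
  have hGne : 𝒢.Nonempty := Finset.card_pos.1 (by omega)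
  have hM1 : 1 ≤ M := by
    obtain ⟨G, hG⟩ := hGne
    calc 1 ≤ G.card := Finset.card_pos.2 (hne G hG)
      _ ≤ 𝒢.sup Finset.card := Finset.le_sup hG
      _ = M := hM.symm
  have hd1 : 1 ≤ s * M := Nat.one_le_iff_ne_zero.2 (by positivity)
  have hfin : (dichotomies {w : Fin p → ℝ |
      (𝒢.filter fun G => ∃ i ∈ G, w i ≠ 0).card ≤ s} x).Finite := Set.toFinite _
  set B : ℕ := ∑ k ∈ Finset.Iic (s * M), m.choose k with hB
  -- the natural-number bound
  have hmain : (dichotomies {w : Fin p → ℝ |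
      (𝒢.filter fun G => ∃ i ∈ G, w i ≠ 0).card ≤ s} x).ncard ≤ N.choose s * B := by
    rw [Set.ncard_eq_toFinset_card _ hfin]
    have hsub : hfin.toFinset ⊆ (𝒢.powersetCard s).biUnion
        (fun S => (Set.toFinite (dichotomies
          {w : Fin p → ℝ | ∀ i ∉ S.biUnion id, w i = 0} x)).toFinset) := by
      intro b hb
      rw [Set.Finite.mem_toFinset] at hb
      obtain ⟨w, hwW, hbw⟩ := hb
      obtain ⟨S, hS0S, hS𝒢, hScard⟩ := Finset.exists_subsuperset_card_eq
        (Finset.filter_subset (fun G => ∃ i ∈ G, w i ≠ 0) 𝒢) hwW (by omega)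
      refine Finset.mem_biUnion.2 ⟨S, Finset.mem_powersetCard.2 ⟨hS𝒢, hScard⟩, ?_⟩
      rw [Set.Finite.mem_toFinset]
      refine ⟨w, ?_, hbw⟩
      intro i hi
      by_contra hwi
      obtain ⟨G, hG𝒢, hiG⟩ := hcover i
      have hGf : G ∈ 𝒢.filter (fun G => ∃ i ∈ G, w i ≠ 0) :=
        Finset.mem_filter.2 ⟨hG𝒢, ⟨i, hiG, hwi⟩⟩
      exact hi (Finset.mem_biUnion.2 ⟨G, hS0S hGf, by simpa using hiG⟩)
    calc hfin.toFinset.card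
        ≤ ((𝒢.powersetCard s).biUnion
          (fun S => (Set.toFinite (dichotomies
            {w : Fin p → ℝ | ∀ i ∉ S.biUnion id, w i = 0} x)).toFinset)).card :=
          Finset.card_le_card hsub
      _ ≤ ∑ S ∈ 𝒢.powersetCard s, ((Set.toFinite (dichotomies
            {w : Fin p → ℝ | ∀ i ∉ S.biUnion id, w i = 0} x)).toFinset).card :=
          Finset.card_biUnion_le
      _ ≤ ∑ _S ∈ 𝒢.powersetCard s, B := by
          refine Finset.sum_le_sum fun S hS => ?_
          rw [← Set.ncard_eq_toFinset_card _ (Set.toFinite _)]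
          refine (dich_ncard_le (S.biUnion id) x).trans ?_
          refine Finset.sum_le_sum_of_subset (Finset.Iic_subset_Iic.2 ?_)
          obtain ⟨hS𝒢, hScard⟩ := Finset.mem_powersetCard.1 hS
          calc (S.biUnion id).card ≤ ∑ G ∈ S, G.card := by
                simpa using Finset.card_biUnion_le (s := S) (t := id)
            _ ≤ S.card • M := Finset.sum_le_card_nsmul S _ M (fun G hG => by
                rw [hM]; exact Finset.le_sup (hS𝒢 hG))
            _ = s * M := by rw [hScard, smul_eq_mul]
      _ = N.choose s * B := by
          rw [Finset.sum_const, smul_eq_mul, Finset.card_powersetCard, hN]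
  have hBr : ((B : ℕ) : ℝ) ≤ (Real.exp 1 * m / (s * M)) ^ (s * M) := by
    have := lemB (s * M) m hd1 hm
    rw [hB]
    push_cast at this ⊢
    exact this
  have hpow0 : (0:ℝ) ≤ (Real.exp 1 * m / (s * M)) ^ (s * M) := by positivity
  have h1 : ((dichotomies {w : Fin p → ℝ |
      (𝒢.filter fun G => ∃ i ∈ G, w i ≠ 0).card ≤ s} x).ncard : ℝ)
      ≤ (N.choose s : ℝ) * (Real.exp 1 * m / (s * M)) ^ (s * M) := by
    calc ((dichotomies _ x).ncard : ℝ) ≤ ((N.choose s * B : ℕ) : ℝ) := by exact_mod_cast hmain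
      _ = (N.choose s : ℝ) * (B : ℝ) := by push_cast; ring
      _ ≤ (N.choose s : ℝ) * (Real.exp 1 * m / (s * M)) ^ (s * M) :=
          mul_le_mul_of_nonneg_left hBr (by positivity)
  refine ⟨h1, h1.trans ?_⟩
  refine mul_le_mul_of_nonneg_right ?_ hpow0
  exact_mod_cast Nat.choose_le_pow N s
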